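/- Let μ(r) = r(1 − log r) for 0 < r ≤ 1, let γ ∈ L¹_loc(ℝ₊;ℝ₊), a > 0, and let α be a measurable function with 0 ≤ α(t) ≤ a + ∫₀ᵗ γ(τ) μ(α(τ)) dτ. Set G(t) = ∫₀ᵗ γ(τ) dτ. If a ≤ exp(1 − exp(G(t))), then α(t) ≤ a^{exp(−G(t))} · exp(1 − exp(−G(t))). -/

import Mathlib

open MeasureTheory Set

noncomputable def osgMu (r : ℝ) : ℝ := r * (1 - Real.log r)
noncomputable def osgProj (r : ℝ) : ℝ := max 0 (min r 1)
noncomputable def osgMuHat (r : ℝ) : ℝ := osgMu (osgProj r)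

lemma osgMu_continuous : Continuous osgMu := by
  have : osgMu = fun r => r - r * Real.log r := by
    ext r; simp [osgMu]; ring
  rw [this]
  exact continuous_id.sub Real.continuous_mul_log

lemma osgMu_le_one {r : ℝ} (hr : 0 ≤ r) : osgMu r ≤ 1 := by
  rcases eq_or_lt_of_le hr with h | h
  · simp [osgMu, ← h]
  · have h1 : Real.log (1/r) ≤ 1/r - 1 := Real.log_le_sub_one_of_pos (by positivity)
    rw [one_div, Real.log_inv] at h1
    have h2 : 1 - Real.log r ≤ 1/r := by rw [one_div]; linarith
    calc osgMu r ≤ r * (1/r) := mul_le_mul_of_nonneg_left h2 hr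
    _ = 1 := by field_simp

lemma osgMu_nonneg {r : ℝ} (h0 : 0 ≤ r) (h1 : r ≤ 1) : 0 ≤ osgMu r := by
  have : Real.log r ≤ 0 := by
    rcases eq_or_lt_of_le h0 with h | h
    · simp [← h]
    · exact Real.log_nonpos h0 h1
  have : 0 ≤ 1 - Real.log r := by linarith
  exact mul_nonneg h0 this

lemma osgMu_hasDerivAt {r : ℝ} (hr : 0 < r) : HasDerivAt osgMu (-Real.log r) r := by
  have h1 : HasDerivAt (fun x : ℝ => x * (1 - Real.log x))
      (1 * (1 - Real.log r) + r * (0 - r⁻¹)) r :=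
    (hasDerivAt_id r).mul ((hasDerivAt_const r 1).sub (Real.hasDerivAt_log hr.ne'))
  have h2 : 1 * (1 - Real.log r) + r * (0 - r⁻¹) = -Real.log r := by
    rw [one_mul, zero_sub, mul_neg, mul_inv_cancel₀ hr.ne']; ring
  rw [h2] at h1
  exact h1

lemma osgMu_monotoneOn : MonotoneOn osgMu (Icc (0:ℝ) 1) := by
  apply monotoneOn_of_deriv_nonneg (convex_Icc 0 1) osgMu_continuous.continuousOn
  · rw [interior_Icc]
    intro x hx
    exact (osgMu_hasDerivAt hx.1).differentiableAt.differentiableWithinAt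
  · rw [interior_Icc]
    intro x hx
    rw [(osgMu_hasDerivAt hx.1).deriv]
    simp [Real.log_nonpos hx.1.le hx.2.le]

lemma osgProj_mem (r : ℝ) : osgProj r ∈ Icc (0:ℝ) 1 :=
  ⟨le_max_left _ _, max_le (by norm_num) (min_le_right _ _)⟩

lemma osgProj_monotone : Monotone osgProj :=
  fun _ _ h => max_le_max le_rfl (min_le_min (by exact h) le_rfl)

lemma osgProj_of_mem {r : ℝ} (h0 : 0 ≤ r) (h1 : r ≤ 1) : osgProj r = r := by
  simp [osgProj, min_eq_left h1, max_eq_right h0]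

lemma osgProj_lipschitz (x y : ℝ) : |osgProj x - osgProj y| ≤ |x - y| := by
  have h1 : |osgProj x - osgProj y| ≤ |min x 1 - min y 1| := by
    simpa [osgProj, max_comm] using abs_max_sub_max_le_abs (min x 1) (min y 1) 0
  refine h1.trans ?_
  have h2 := abs_max_sub_max_le_abs (-x) (-y) (-1)
  have e1 : min x 1 = -max (-x) (-1) := by rw [max_neg_neg, neg_neg]
  have e2 : min y 1 = -max (-y) (-1) := by rw [max_neg_neg, neg_neg]
  rw [e1, e2]
  calc |-max (-x) (-1) - -max (-y) (-1)| = |max (-x) (-1) - max (-y) (-1)| := by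
        rw [← abs_neg]; ring_nf
  _ ≤ |-x - -y| := h2
  _ = |x - y| := by rw [← abs_neg]; ring_nf

lemma osgMuHat_monotone {x y : ℝ} (h : x ≤ y) : osgMuHat x ≤ osgMuHat y :=
  osgMu_monotoneOn (osgProj_mem x) (osgProj_mem y) (osgProj_monotone h)

lemma osgMu_le_osgMuHat {r : ℝ} (h : 0 ≤ r) : osgMu r ≤ osgMuHat r := by
  rcases le_total r 1 with h1 | h1
  · rw [osgMuHat, osgProj_of_mem h h1]
  · have : osgProj r = 1 := by
      simp [osgProj, min_eq_right h1]
    rw [osgMuHat, this]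
    calc osgMu r ≤ 1 := osgMu_le_one h
    _ = osgMu 1 := by simp [osgMu]

lemma osgMuHat_nonneg (r : ℝ) : 0 ≤ osgMuHat r :=
  osgMu_nonneg (osgProj_mem r).1 (osgProj_mem r).2

lemma osgMuHat_continuous : Continuous osgMuHat := by
  apply osgMu_continuous.comp
  exact continuous_const.max (continuous_id.min continuous_const)

lemma osgMu_lipschitzOnWith {a : ℝ} (ha0 : 0 < a) (ha1 : a ≤ 1) :
    LipschitzOnWith (Real.toNNReal (1 - Real.log a)) osgMu (Icc a 1) := by
  apply (convex_Icc a 1).lipschitzOnWith_of_nnnorm_hasDerivWithin_le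
    (f' := fun r => -Real.log r)
  · intro x hx
    exact (osgMu_hasDerivAt (lt_of_lt_of_le ha0 hx.1)).hasDerivWithinAt
  · intro x hx
    have hx0 : 0 < x := lt_of_lt_of_le ha0 hx.1
    have h1 : Real.log a ≤ Real.log x := Real.log_le_log ha0 hx.1
    have h2 : Real.log x ≤ 0 := Real.log_nonpos hx0.le hx.2
    rw [← NNReal.coe_le_coe]
    rw [coe_nnnorm, Real.coe_toNNReal _ (by nlinarith [Real.log_nonpos ha0.le ha1])]
    rw [Real.norm_eq_abs, abs_neg, abs_of_nonpos h2]
    linarith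

lemma osgMuHat_lip {a x y : ℝ} (ha0 : 0 < a) (ha1 : a ≤ 1) (hx : a ≤ x) (hy : a ≤ y) :
    osgMuHat x - osgMuHat y ≤ (1 - Real.log a) * |x - y| := by
  have hmem : ∀ r : ℝ, a ≤ r → osgProj r ∈ Icc a 1 := by
    intro r hr
    exact ⟨le_max_of_le_right (le_min hr ha1), (osgProj_mem r).2⟩
  have h := (osgMu_lipschitzOnWith ha0 ha1).dist_le_mul _ (hmem x hx) _ (hmem y hy)
  rw [Real.dist_eq, Real.dist_eq, Real.coe_toNNReal _ (by nlinarith [Real.log_nonpos ha0.le ha1])] at h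
  calc osgMuHat x - osgMuHat y ≤ |osgMu (osgProj x) - osgMu (osgProj y)| := le_abs_self _
  _ ≤ (1 - Real.log a) * |osgProj x - osgProj y| := h
  _ ≤ (1 - Real.log a) * |x - y| := by
      apply mul_le_mul_of_nonneg_left (osgProj_lipschitz x y)
      nlinarith [Real.log_nonpos ha0.le ha1]

noncomputable def osgF (a x : ℝ) : ℝ :=
  Real.exp (Real.exp (-x) * Real.log a + (1 - Real.exp (-x)))

lemma osgF_pos (a x : ℝ) : 0 < osgF a x := Real.exp_pos _

lemma osgF_zero {a : ℝ} (ha : 0 < a) : osgF a 0 = a := by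
  simp [osgF, Real.exp_log ha]

lemma osgF_hasDerivAt (a x : ℝ) : HasDerivAt (osgF a) (osgMu (osgF a x)) x := by
  have hexp : HasDerivAt (fun x : ℝ => Real.exp (-x)) (Real.exp (-x) * (-1)) x :=
    (Real.hasDerivAt_exp (-x)).comp x (hasDerivAt_neg x)
  have hg : HasDerivAt (fun x : ℝ => Real.exp (-x) * Real.log a + (1 - Real.exp (-x)))
      ((Real.exp (-x) * (-1)) * Real.log a + (0 - Real.exp (-x) * (-1))) x :=
    (hexp.mul_const _).add ((hasDerivAt_const x 1).sub hexp)
  have hF := (Real.hasDerivAt_exp _).comp x hg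
  convert hF using 1
  · rfl
  · rfl
  · rfl
  simp only [osgMu, osgF, Real.log_exp]
  ring

lemma osgF_monotone {a : ℝ} (ha : Real.log a ≤ 1) : Monotone (osgF a) := by
  intro x y hxy
  apply Real.exp_le_exp.mpr
  have h1 : Real.exp (-y) ≤ Real.exp (-x) := Real.exp_le_exp.mpr (by linarith)
  nlinarith [Real.exp_pos (-x), Real.exp_pos (-y)]

lemma osgF_le_one {a x : ℝ} (h : Real.log a ≤ 1 - Real.exp x) : osgF a x ≤ 1 := by
  have h1 : Real.exp (-x) * Real.exp x = 1 := by rw [← Real.exp_add]; simp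
  have h2 : Real.exp (-x) * Real.log a + (1 - Real.exp (-x)) ≤ 0 := by
    nlinarith [Real.exp_pos (-x), mul_le_mul_of_nonneg_left h (Real.exp_pos (-x)).le]
  calc osgF a x ≤ Real.exp 0 := Real.exp_le_exp.mpr h2
  _ = 1 := Real.exp_zero

lemma osgF_continuous (a : ℝ) : Continuous (osgF a) := by
  apply Real.continuous_exp.comp
  continuity

lemma osg_subst (k h : ℝ → ℝ) (s : ℝ) (hs : 0 ≤ s)
    (hk : IntegrableOn k (Icc 0 s)) (hk0 : ∀ τ ∈ Icc (0:ℝ) s, 0 ≤ k τ)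
    (hh : Continuous h) :
    (∫ τ in (0:ℝ)..s, k τ * h (∫ σ in (0:ℝ)..τ, k σ)) ≤
      ∫ u in (0:ℝ)..(∫ σ in (0:ℝ)..s, k σ), h u := by
  set G : ℝ → ℝ := fun r => ∫ σ in (0:ℝ)..r, k σ with hGdef
  set K : ℝ := G s with hKdef
  -- basic facts
  have hkint : ∀ c d, c ∈ Icc (0:ℝ) s → d ∈ Icc (0:ℝ) s → IntervalIntegrable k volume c d := by
    intro c d hc hd
    apply (hk.mono_set _).intervalIntegrable
    rw [show Icc (0:ℝ) s = uIcc 0 s from (uIcc_of_le hs).symm] at hc hd ⊢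
    exact uIcc_subset_uIcc hc hd
  have hGdiff : ∀ c d, c ∈ Icc (0:ℝ) s → d ∈ Icc (0:ℝ) s →
      G d - G c = ∫ σ in c..d, k σ := by
    intro c d hc hd
    have := intervalIntegral.integral_add_adjacent_intervals
      (hkint 0 c (left_mem_Icc.mpr hs) hc) (hkint c d hc hd)
    simp only [hGdef]
    linarith [this]
  have hGmono : ∀ c d, c ∈ Icc (0:ℝ) s → d ∈ Icc (0:ℝ) s → c ≤ d → G c ≤ G d := by
    intro c d hc hd hcd
    have h1 := hGdiff c d hc hd
    have h2 : 0 ≤ ∫ σ in c..d, k σ := by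
      apply intervalIntegral.integral_nonneg hcd
      intro u hu
      exact hk0 u ⟨le_trans hc.1 hu.1, le_trans hu.2 hd.2⟩
    linarith
  have hG0 : G 0 = 0 := intervalIntegral.integral_same
  have hGmem : ∀ c, c ∈ Icc (0:ℝ) s → G c ∈ Icc (0:ℝ) K := by
    intro c hc
    constructor
    · rw [← hG0]; exact hGmono 0 c (left_mem_Icc.mpr hs) hc hc.1
    · exact hGmono c s hc (right_mem_Icc.mpr hs) hc.2
  have hK0 : 0 ≤ K := by
    have := hGmem s (right_mem_Icc.mpr hs); exact (hGmem s (right_mem_Icc.mpr hs)).1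
  have hGcont : ContinuousOn G (Icc 0 s) := by
    have := intervalIntegral.continuousOn_primitive_interval
      (f := k) (a := (0:ℝ)) (b := s) (by rwa [uIcc_of_le hs])
    rwa [uIcc_of_le hs] at this
  have hintkh : ∀ c d, c ∈ Icc (0:ℝ) s → d ∈ Icc (0:ℝ) s →
      IntervalIntegrable (fun τ => k τ * h (G τ)) volume c d := by
    intro c d hc hd
    apply (hkint c d hc hd).mul_continuousOn
    apply hh.comp_continuousOn
    apply hGcont.mono
    rw [show Icc (0:ℝ) s = uIcc 0 s from (uIcc_of_le hs).symm] at hc hd ⊢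
    exact uIcc_subset_uIcc hc hd
  -- epsilon argument
  have key : ∀ ε : ℝ, 0 < ε →
      (∫ τ in (0:ℝ)..s, k τ * h (G τ)) ≤ (∫ u in (0:ℝ)..K, h u) + ε * (2*K + 2) := by
    intro ε hε
    -- uniform continuity of h on [0, K]
    obtain ⟨δ, hδ, Hh⟩ := Metric.uniformContinuousOn_iff.mp
      ((isCompact_Icc (a := (0:ℝ)) (b := K)).uniformContinuousOn_of_continuous
        hh.continuousOn) ε hε
    -- uniform continuity of G on [0, s]
    obtain ⟨ρ, hρ, HG⟩ := Metric.uniformContinuousOn_iff.mp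
      ((isCompact_Icc (a := (0:ℝ)) (b := s)).uniformContinuousOn_of_continuous hGcont) δ hδ
    obtain ⟨n, hn⟩ := exists_nat_gt (s / ρ)
    have hn0 : 0 < n := by
      by_contra hcon
      push_neg at hcon
      interval_cases n
      simp at hn
      nlinarith [div_nonneg hs hρ.le]
    have hsn : s / n < ρ := by
      rw [div_lt_iff₀ (by positivity)]
      rw [div_lt_iff₀ hρ] at hn
      nlinarith
    have hsn0 : 0 ≤ s / n := by positivity
    set p : ℕ → ℝ := fun i => i * (s / n) with hpdef
    have hp_mem : ∀ i, i ≤ n → p i ∈ Icc (0:ℝ) s := by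
      intro i hi
      constructor
      · positivity
      · rw [hpdef]
        calc (i : ℝ) * (s / n) ≤ n * (s / n) := by
              apply mul_le_mul_of_nonneg_right _ hsn0
              exact_mod_cast hi
        _ = s := by field_simp
    have hpn : p n = s := by rw [hpdef]; field_simp
    have hp0 : p 0 = 0 := by simp [hpdef]
    have hpstep : ∀ i : ℕ, p (i + 1) - p i = s / n := by
      intro i; rw [hpdef]; push_cast; ring
    have hple : ∀ i : ℕ, p i ≤ p (i + 1) := by
      intro i; have := hpstep i; linarith
    set q : ℕ → ℝ := fun i => G (p i) with hqdef
    have hq_mem : ∀ i, i ≤ n → q i ∈ Icc (0:ℝ) K := fun i hi => hGmem _ (hp_mem i hi)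
    have hqle : ∀ i, i + 1 ≤ n → q i ≤ q (i + 1) := by
      intro i hi
      exact hGmono _ _ (hp_mem i (by omega)) (hp_mem (i+1) hi) (hple i)
    have hqdelta : ∀ i, i + 1 ≤ n → q (i + 1) - q i < δ := by
      intro i hi
      have hdist : dist (p i) (p (i+1)) < ρ := by
        rw [Real.dist_eq]
        have hst := hpstep i
        rw [abs_of_nonpos (by linarith)]
        linarith
      have h1 := HG (p i) (hp_mem i (by omega)) (p (i+1)) (hp_mem (i+1) hi) hdist
      rw [Real.dist_eq] at h1
      calc q (i+1) - q i ≤ |q i - q (i+1)| := by rw [abs_sub_comm]; exact le_abs_self _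
      _ < δ := h1
    -- split both integrals
    have hLHS : (∫ τ in (0:ℝ)..s, k τ * h (G τ)) =
        ∑ i ∈ Finset.range n, ∫ τ in p i..p (i+1), k τ * h (G τ) := by
      rw [← hp0, ← hpn] at *
      exact (intervalIntegral.sum_integral_adjacent_intervals (fun i hi =>
        hintkh _ _ (hp_mem i (by omega)) (hp_mem (i+1) (by omega)))).symm
    have hRHS : (∫ u in (0:ℝ)..K, h u) =
        ∑ i ∈ Finset.range n, ∫ u in q i..q (i+1), h u := by
      have : K = q n := by rw [hqdef]; simp [hpn, hKdef]
      have h0 : (0:ℝ) = q 0 := by rw [hqdef]; simp [hp0, hG0]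
      rw [this, h0]
      exact (intervalIntegral.sum_integral_adjacent_intervals (fun i hi =>
        hh.intervalIntegrable _ _)).symm
    rw [hLHS, hRHS]
    have hpiece : ∀ i, i < n →
        (∫ τ in p i..p (i+1), k τ * h (G τ)) ≤
          (∫ u in q i..q (i+1), h u) + 2 * ε * (q (i+1) - q i) := by
      intro i hi
      have hqd := hqdelta i hi
      have hql := hqle i hi
      have hqi := hq_mem i (by omega)
      have hqi1 := hq_mem (i+1) hi
      -- bound on subinterval
      have hb1 : (∫ τ in p i..p (i+1), k τ * h (G τ)) ≤
          (q (i+1) - q i) * (h (q i) + ε) := by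
        have := intervalIntegral.integral_mono_on (hple i)
          (hintkh _ _ (hp_mem i (by omega)) (hp_mem (i+1) hi))
          (((hkint _ _ (hp_mem i (by omega)) (hp_mem (i+1) hi))).mul_const (h (q i) + ε))
          (g := fun τ => k τ * (h (q i) + ε)) ?_
        · rw [intervalIntegral.integral_mul_const] at this
          rw [← hGdiff _ _ (hp_mem i (by omega)) (hp_mem (i+1) hi)] at this
          exact this
        · intro τ hτ
          have hτs : τ ∈ Icc (0:ℝ) s :=
            ⟨le_trans (hp_mem i (by omega)).1 hτ.1, le_trans hτ.2 (hp_mem (i+1) hi).2⟩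
          have hkτ := hk0 τ hτs
          have hGτ : G τ ∈ Icc (0:ℝ) K := hGmem τ hτs
          have hdist : dist τ (p i) < ρ := by
            rw [Real.dist_eq, abs_of_nonneg (by linarith [hτ.1])]
            have := hpstep i
            linarith [hτ.2]
          have hGd := HG τ hτs (p i) (hp_mem i (by omega)) hdist
          have hhd := Hh (G τ) hGτ (q i) hqi hGd
          rw [Real.dist_eq] at hhd
          have : h (G τ) ≤ h (q i) + ε := by
            have := abs_lt.mp hhd
            linarith [this.1]
          exact mul_le_mul_of_nonneg_left this hkτ
      have hb2 : (q (i+1) - q i) * (h (q i) - ε) ≤ ∫ u in q i..q (i+1), h u := by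
        have := intervalIntegral.integral_mono_on hql
          (intervalIntegrable_const (μ := volume) (c := h (q i) - ε))
          (hh.intervalIntegrable _ _)
          (f := fun _ => h (q i) - ε) ?_
        · rw [intervalIntegral.integral_const] at this
          rw [smul_eq_mul] at this
          linarith [this]
        · intro u hu
          have huK : u ∈ Icc (0:ℝ) K := ⟨le_trans hqi.1 hu.1, le_trans hu.2 hqi1.2⟩
          have hdist : dist u (q i) < δ := by
            rw [Real.dist_eq, abs_of_nonneg (by linarith [hu.1])]
            linarith [hu.2]
          have hhd := Hh u huK (q i) hqi hdist
          rw [Real.dist_eq] at hhd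
          have h2 := (abs_lt.mp hhd).1
          show h (q i) - ε ≤ h u
          linarith
      have hqd0 : 0 ≤ q (i+1) - q i := by linarith
      nlinarith [hb1, hb2]
    calc (∑ i ∈ Finset.range n, ∫ τ in p i..p (i+1), k τ * h (G τ)) ≤
        ∑ i ∈ Finset.range n, ((∫ u in q i..q (i+1), h u) + 2 * ε * (q (i+1) - q i)) := by
          exact Finset.sum_le_sum (fun i hi => hpiece i (Finset.mem_range.mp hi))
    _ = (∑ i ∈ Finset.range n, ∫ u in q i..q (i+1), h u) +
          2 * ε * (∑ i ∈ Finset.range n, (q (i+1) - q i)) := by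
          rw [Finset.sum_add_distrib, Finset.mul_sum]
    _ = (∑ i ∈ Finset.range n, ∫ u in q i..q (i+1), h u) + 2 * ε * K := by
          rw [Finset.sum_range_sub]
          congr 2
          rw [hqdef]; simp [hpn, hp0, hG0, hKdef]
    _ ≤ _ := by nlinarith
  apply le_of_forall_pos_le_add
  intro ε' hε'
  have h2K : 0 < 2 * K + 2 := by linarith
  have := key (ε' / (2 * K + 2)) (by positivity)
  calc (∫ τ in (0:ℝ)..s, k τ * h (G τ)) ≤
      (∫ u in (0:ℝ)..K, h u) + (ε' / (2 * K + 2)) * (2 * K + 2) := this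
  _ = (∫ u in (0:ℝ)..K, h u) + ε' := by field_simp

lemma osg_vanish (k v : ℝ → ℝ) (t : ℝ) (ht : 0 ≤ t)
    (hk : IntegrableOn k (Icc 0 t)) (hk0 : ∀ τ ∈ Icc (0:ℝ) t, 0 ≤ k τ)
    (hv : ContinuousOn v (Icc 0 t)) (hv0 : ∀ s ∈ Icc (0:ℝ) t, 0 ≤ v s)
    (hineq : ∀ s ∈ Icc (0:ℝ) t, v s ≤ ∫ τ in (0:ℝ)..s, k τ * v τ) :
    v t = 0 := by
  set G : ℝ → ℝ := fun r => ∫ σ in (0:ℝ)..r, k σ with hGdef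
  have hkint : ∀ c d, c ∈ Icc (0:ℝ) t → d ∈ Icc (0:ℝ) t → IntervalIntegrable k volume c d := by
    intro c d hc hd
    apply (hk.mono_set _).intervalIntegrable
    rw [show Icc (0:ℝ) t = uIcc 0 t from (uIcc_of_le ht).symm] at hc hd ⊢
    exact uIcc_subset_uIcc hc hd
  have hGdiff : ∀ c d, c ∈ Icc (0:ℝ) t → d ∈ Icc (0:ℝ) t →
      G d - G c = ∫ σ in c..d, k σ := by
    intro c d hc hd
    have := intervalIntegral.integral_add_adjacent_intervals
      (hkint 0 c (left_mem_Icc.mpr ht) hc) (hkint c d hc hd)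
    simp only [hGdef]
    linarith [this]
  have hGcont : ContinuousOn G (Icc 0 t) := by
    have := intervalIntegral.continuousOn_primitive_interval
      (f := k) (a := (0:ℝ)) (b := t) (by rwa [uIcc_of_le ht])
    rwa [uIcc_of_le ht] at this
  have hintkv : ∀ c d, c ∈ Icc (0:ℝ) t → d ∈ Icc (0:ℝ) t →
      IntervalIntegrable (fun τ => k τ * v τ) volume c d := by
    intro c d hc hd
    apply (hkint c d hc hd).mul_continuousOn
    apply hv.mono
    rw [show Icc (0:ℝ) t = uIcc 0 t from (uIcc_of_le ht).symm] at hc hd ⊢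
    exact uIcc_subset_uIcc hc hd
  -- uniform continuity of G : pick ρ so that increments of G are < 1/2
  obtain ⟨ρ, hρ, HG⟩ := Metric.uniformContinuousOn_iff.mp
    ((isCompact_Icc (a := (0:ℝ)) (b := t)).uniformContinuousOn_of_continuous hGcont)
    (1/2) (by norm_num)
  obtain ⟨n, hn⟩ := exists_nat_gt (t / ρ)
  have hn0 : 0 < n := by
    by_contra hcon
    push_neg at hcon
    interval_cases n
    simp at hn
    nlinarith [div_nonneg ht hρ.le]
  have htn : t / n < ρ := by
    rw [div_lt_iff₀ (by positivity)]
    rw [div_lt_iff₀ hρ] at hn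
    nlinarith
  have htn0 : 0 ≤ t / n := by positivity
  set p : ℕ → ℝ := fun i => i * (t / n) with hpdef
  have hp_mem : ∀ i, i ≤ n → p i ∈ Icc (0:ℝ) t := by
    intro i hi
    refine ⟨by positivity, ?_⟩
    rw [hpdef]
    calc (i : ℝ) * (t / n) ≤ n * (t / n) := by
          apply mul_le_mul_of_nonneg_right _ htn0
          exact_mod_cast hi
    _ = t := by field_simp
  have hpn : p n = t := by rw [hpdef]; field_simp
  have hp0 : p 0 = 0 := by simp [hpdef]
  have hpstep : ∀ i : ℕ, p (i + 1) - p i = t / n := by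
    intro i; rw [hpdef]; push_cast; ring
  have hple : ∀ i : ℕ, p i ≤ p (i + 1) := by
    intro i; have := hpstep i; linarith
  have hGstep : ∀ c d, c ∈ Icc (0:ℝ) t → d ∈ Icc (0:ℝ) t → c ≤ d → d - c ≤ t/n →
      (∫ σ in c..d, k σ) ≤ 1/2 := by
    intro c d hc hd hcd hdc
    have hdist : dist c d < ρ := by
      rw [Real.dist_eq, abs_of_nonpos (by linarith)]
      linarith
    have h1 := HG c hc d hd hdist
    rw [Real.dist_eq] at h1
    have h2 : G d - G c ≤ |G c - G d| := by rw [abs_sub_comm]; exact le_abs_self _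
    rw [← hGdiff c d hc hd]
    linarith
  -- main induction
  have main : ∀ i, i ≤ n → ∀ s, s ∈ Icc (0:ℝ) (p i) → v s = 0 := by
    intro i
    induction i with
    | zero =>
      intro _ s hs
      rw [hp0] at hs
      have hs0 : s = 0 := le_antisymm hs.2 hs.1
      subst hs0
      have h1 := hineq 0 (left_mem_Icc.mpr ht)
      rw [intervalIntegral.integral_same] at h1
      exact le_antisymm h1 (hv0 0 (left_mem_Icc.mpr ht))
    | succ i ih =>
      intro hi s hs
      have hIH := ih (by omega)
      have hpi := hp_mem i (by omega)
      have hpi1 := hp_mem (i+1) hi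
      rcases le_total s (p i) with hcase | hcase
      · exact hIH s ⟨hs.1, hcase⟩
      -- s ∈ [p i, p (i+1)]
      have hJ : Icc (p i) (p (i+1)) ⊆ Icc (0:ℝ) t := fun u hu =>
        ⟨le_trans hpi.1 hu.1, le_trans hu.2 hpi1.2⟩
      obtain ⟨m, hmJ, hm⟩ := (isCompact_Icc (a := p i) (b := p (i+1))).exists_isMaxOn
        (nonempty_Icc.mpr (hple i)) (hv.mono hJ)
      set M := v m with hMdef
      have hM0 : 0 ≤ M := hv0 m (hJ hmJ)
      -- every point of J satisfies v ≤ M/2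
      have hhalf : ∀ u, u ∈ Icc (p i) (p (i+1)) → v u ≤ M / 2 := by
        intro u hu
        have hut : u ∈ Icc (0:ℝ) t := hJ hu
        have h1 := hineq u hut
        have hsplit : (∫ τ in (0:ℝ)..u, k τ * v τ) =
            (∫ τ in (0:ℝ)..p i, k τ * v τ) + ∫ τ in p i..u, k τ * v τ :=
          (intervalIntegral.integral_add_adjacent_intervals
            (hintkv 0 (p i) (left_mem_Icc.mpr ht) hpi) (hintkv (p i) u hpi hut)).symm
        have hzero : (∫ τ in (0:ℝ)..p i, k τ * v τ) = 0 := by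
          have hcg : EqOn (fun τ => k τ * v τ) (fun _ => (0:ℝ)) (uIcc 0 (p i)) := by
            intro τ hτ
            rw [uIcc_of_le hpi.1] at hτ
            simp [hIH τ hτ]
          rw [intervalIntegral.integral_congr hcg]
          simp
        have hbound : (∫ τ in p i..u, k τ * v τ) ≤ ∫ τ in p i..u, k τ * (M/2 * 2) := by
          apply intervalIntegral.integral_mono_on hu.1 (hintkv (p i) u hpi hut)
            ((hkint (p i) u hpi hut).mul_const _)
          intro τ hτ
          have hτJ : τ ∈ Icc (p i) (p (i+1)) := ⟨hτ.1, le_trans hτ.2 hu.2⟩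
          have := hm hτJ
          show k τ * v τ ≤ k τ * (M/2*2)
          have hvτ : v τ ≤ M := this
          apply mul_le_mul_of_nonneg_left (by linarith) (hk0 τ (hJ hτJ))
        rw [intervalIntegral.integral_mul_const] at hbound
        have hks : (∫ τ in p i..u, k τ) ≤ 1/2 := by
          apply hGstep (p i) u hpi hut hu.1
          have := hpstep i
          linarith [hu.2]
        have hknn : 0 ≤ ∫ τ in p i..u, k τ := by
          apply intervalIntegral.integral_nonneg hu.1
          intro x hx
          exact hk0 x (hJ ⟨hx.1, le_trans hx.2 hu.2⟩)
        have : (∫ τ in p i..u, k τ) * (M/2*2) ≤ 1/2 * (M/2*2) := by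
          apply mul_le_mul_of_nonneg_right hks (by linarith)
        rw [hsplit, hzero] at h1
        linarith
      have hM : M = 0 := by
        have := hhalf m hmJ
        rw [← hMdef] at this
        linarith
      have := hhalf s ⟨hcase, hs.2⟩
      have hvs0 := hv0 s (hJ ⟨hcase, hs.2⟩)
      rw [hM] at this
      linarith
  have := main n le_rfl t (by rw [hpn]; exact right_mem_Icc.mpr ht)
  exact this

/-- Quantitative Osgood lemma in the log-Lipschitz case `μ(r) = r(1 - log r)`:
if `0 ≤ α t ≤ a + ∫₀ᵗ γ(τ) μ(α τ) dτ` and `a ≤ exp(1 - exp G(t))` with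
`G t = ∫₀ᵗ γ`, then `α t ≤ a ^ (exp (-G t)) * exp (1 - exp (-G t))`. -/
theorem osgood_log_lipschitz (γ α : ℝ → ℝ) (a : ℝ) (ha : 0 < a)
    (hγ_nonneg : ∀ t, 0 ≤ t → 0 ≤ γ t)
    (hγ_loc : ∀ t, 0 ≤ t → IntegrableOn γ (Icc 0 t))
    (hα_meas : Measurable α)
    (hα : ∀ t, 0 ≤ t →
      0 ≤ α t ∧ α t ≤ a + ∫ τ in (0:ℝ)..t, γ τ * (α τ * (1 - Real.log (α τ)))) :
    ∀ t, 0 ≤ t →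
      a ≤ Real.exp (1 - Real.exp (∫ τ in (0:ℝ)..t, γ τ)) →
      α t ≤ a ^ (Real.exp (-(∫ τ in (0:ℝ)..t, γ τ))) *
        Real.exp (1 - Real.exp (-(∫ τ in (0:ℝ)..t, γ τ))) := by
  intro t ht haG
  set G : ℝ → ℝ := fun r => ∫ σ in (0:ℝ)..r, γ σ with hGdef
  -- basic facts about G
  have hkint : ∀ c d, c ∈ Icc (0:ℝ) t → d ∈ Icc (0:ℝ) t → IntervalIntegrable γ volume c d := by
    intro c d hc hd
    apply ((hγ_loc t ht).mono_set _).intervalIntegrable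
    rw [show Icc (0:ℝ) t = uIcc 0 t from (uIcc_of_le ht).symm] at hc hd ⊢
    exact uIcc_subset_uIcc hc hd
  have hGdiff : ∀ c d, c ∈ Icc (0:ℝ) t → d ∈ Icc (0:ℝ) t →
      G d - G c = ∫ σ in c..d, γ σ := by
    intro c d hc hd
    have := intervalIntegral.integral_add_adjacent_intervals
      (hkint 0 c (left_mem_Icc.mpr ht) hc) (hkint c d hc hd)
    simp only [hGdef]
    linarith [this]
  have hGmono : ∀ c d, c ∈ Icc (0:ℝ) t → d ∈ Icc (0:ℝ) t → c ≤ d → G c ≤ G d := by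
    intro c d hc hd hcd
    have h1 := hGdiff c d hc hd
    have h2 : 0 ≤ ∫ σ in c..d, γ σ := by
      apply intervalIntegral.integral_nonneg hcd
      intro u hu
      exact hγ_nonneg u (le_trans hc.1 hu.1)
    linarith
  have hG0 : G 0 = 0 := intervalIntegral.integral_same
  have hGmem : ∀ c, c ∈ Icc (0:ℝ) t → G c ∈ Icc (0:ℝ) (G t) := by
    intro c hc
    constructor
    · rw [← hG0]; exact hGmono 0 c (left_mem_Icc.mpr ht) hc hc.1
    · exact hGmono c t hc (right_mem_Icc.mpr ht) hc.2
  have hGcont : ContinuousOn G (Icc 0 t) := by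
    have := intervalIntegral.continuousOn_primitive_interval
      (f := γ) (a := (0:ℝ)) (b := t) (by rw [uIcc_of_le ht]; exact hγ_loc t ht)
    rwa [uIcc_of_le ht] at this
  have hGt0 : 0 ≤ G t := (hGmem t (right_mem_Icc.mpr ht)).1
  -- consequences of the smallness assumption on a
  have hloga : Real.log a ≤ 1 - Real.exp (G t) := by
    have := Real.log_le_log ha haG
    rwa [Real.log_exp] at this
  have hexpGt : 1 ≤ Real.exp (G t) := Real.one_le_exp hGt0
  have hloga0 : Real.log a ≤ 0 := by linarith
  have hloga1 : Real.log a ≤ 1 := by linarith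
  have ha1 : a ≤ 1 := by
    have := Real.exp_le_exp.mpr hloga0
    rwa [Real.exp_log ha, Real.exp_zero] at this
  -- a priori bound for α
  have hαb : ∀ s, s ∈ Icc (0:ℝ) t → α s ≤ a + G t := by
    intro s hs
    by_cases hii : IntervalIntegrable
        (fun τ => γ τ * (α τ * (1 - Real.log (α τ)))) volume 0 s
    · have h1 := (hα s hs.1).2
      have h2 : (∫ τ in (0:ℝ)..s, γ τ * (α τ * (1 - Real.log (α τ)))) ≤ G s := by
        simp only [hGdef]
        apply intervalIntegral.integral_mono_on hs.1 hii
          (hkint 0 s (left_mem_Icc.mpr ht) hs)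
        intro τ hτ
        have hγτ := hγ_nonneg τ hτ.1
        have hμ : α τ * (1 - Real.log (α τ)) ≤ 1 := osgMu_le_one (hα τ hτ.1).1
        calc γ τ * (α τ * (1 - Real.log (α τ))) ≤ γ τ * 1 :=
              mul_le_mul_of_nonneg_left hμ hγτ
        _ = γ τ := mul_one _
      have h3 : G s ≤ G t := (hGmem s hs).2
      linarith
    · have h1 := (hα s hs.1).2
      rw [intervalIntegral.integral_undef hii] at h1
      linarith
  -- integrability of the main integrand
  obtain ⟨C, hC⟩ := (isCompact_Icc (a := (0:ℝ)) (b := a + G t)).exists_bound_of_continuousOn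
    osgMu_continuous.continuousOn
  have hfint : IntegrableOn (fun τ => γ τ * (α τ * (1 - Real.log (α τ)))) (Icc 0 t) := by
    apply Integrable.mono' ((hγ_loc t ht).const_mul C)
    · apply AEStronglyMeasurable.mul (hγ_loc t ht).aestronglyMeasurable
      exact (Measurable.aestronglyMeasurable
        ((hα_meas.mul (measurable_const.sub (Real.measurable_log.comp hα_meas)))))
    · rw [ae_restrict_iff' measurableSet_Icc]
      filter_upwards with τ
      intro hτ
      have hγτ := hγ_nonneg τ hτ.1
      have hατ : α τ ∈ Icc (0:ℝ) (a + G t) := ⟨(hα τ hτ.1).1, hαb τ hτ⟩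
      have hμC : ‖osgMu (α τ)‖ ≤ C := hC _ hατ
      have : ‖γ τ * (α τ * (1 - Real.log (α τ)))‖ = γ τ * ‖osgMu (α τ)‖ := by
        rw [norm_mul]
        congr 1
        exact Real.norm_of_nonneg hγτ
      rw [this]
      calc γ τ * ‖osgMu (α τ)‖ ≤ γ τ * C := by
            apply mul_le_mul_of_nonneg_left hμC hγτ
      _ = C * γ τ := mul_comm _ _
  have hfint' : ∀ c d, c ∈ Icc (0:ℝ) t → d ∈ Icc (0:ℝ) t →
      IntervalIntegrable (fun τ => γ τ * (α τ * (1 - Real.log (α τ)))) volume c d := by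
    intro c d hc hd
    apply (hfint.mono_set _).intervalIntegrable
    rw [show Icc (0:ℝ) t = uIcc 0 t from (uIcc_of_le ht).symm] at hc hd ⊢
    exact uIcc_subset_uIcc hc hd
  -- the majorant β
  set β : ℝ → ℝ := fun s => a + ∫ τ in (0:ℝ)..s, γ τ * (α τ * (1 - Real.log (α τ)))
    with hβdef
  have hβcont : ContinuousOn β (Icc 0 t) := by
    simp only [hβdef]
    apply continuousOn_const.add
    have := intervalIntegral.continuousOn_primitive_interval
      (f := fun τ => γ τ * (α τ * (1 - Real.log (α τ)))) (a := (0:ℝ)) (b := t)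
      (by rwa [uIcc_of_le ht])
    rwa [uIcc_of_le ht] at this
  have hαβ : ∀ s, 0 ≤ s → α s ≤ β s := fun s h => (hα s h).2
  have hβ0 : ∀ s, 0 ≤ s → 0 ≤ β s := fun s h => le_trans (hα s h).1 (hαβ s h)
  have hcont_uIcc : ∀ (g : ℝ → ℝ), ContinuousOn g (Icc 0 t) → ∀ c d, c ∈ Icc (0:ℝ) t →
      d ∈ Icc (0:ℝ) t → ContinuousOn g (uIcc c d) := by
    intro g hg c d hc hd
    apply hg.mono
    rw [show Icc (0:ℝ) t = uIcc 0 t from (uIcc_of_le ht).symm] at hc hd ⊢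
    exact uIcc_subset_uIcc hc hd
  have hmhβint : ∀ c d, c ∈ Icc (0:ℝ) t → d ∈ Icc (0:ℝ) t →
      IntervalIntegrable (fun τ => γ τ * osgMuHat (β τ)) volume c d := by
    intro c d hc hd
    exact (hkint c d hc hd).mul_continuousOn
      (hcont_uIcc (fun τ => osgMuHat (β τ))
        (osgMuHat_continuous.comp_continuousOn hβcont) c d hc hd)
  have hβμ : ∀ s, s ∈ Icc (0:ℝ) t →
      β s ≤ a + ∫ τ in (0:ℝ)..s, γ τ * osgMuHat (β τ) := by
    intro s hs
    simp only [hβdef]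
    gcongr
    apply intervalIntegral.integral_mono_on hs.1
      (hfint' 0 s (left_mem_Icc.mpr ht) hs)
      (hmhβint 0 s (left_mem_Icc.mpr ht) hs)
    intro τ hτ
    have hτt : τ ∈ Icc (0:ℝ) t := ⟨hτ.1, le_trans hτ.2 hs.2⟩
    have hγτ := hγ_nonneg τ hτ.1
    have h1 : osgMu (α τ) ≤ osgMuHat (α τ) := osgMu_le_osgMuHat (hα τ hτ.1).1
    have h2 : osgMuHat (α τ) ≤ osgMuHat (β τ) := osgMuHat_monotone (hαβ τ hτ.1)
    exact mul_le_mul_of_nonneg_left (le_trans h1 h2) hγτ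
  -- the explicit supersolution φ
  set φ : ℝ → ℝ := fun s => osgF a (G s) with hφdef
  have hφcont : ContinuousOn φ (Icc 0 t) := (osgF_continuous a).comp_continuousOn hGcont
  have hφa : ∀ s, s ∈ Icc (0:ℝ) t → a ≤ φ s := by
    intro s hs
    have h1 : osgF a 0 ≤ osgF a (G s) := osgF_monotone hloga1 (hGmem s hs).1
    rwa [osgF_zero ha] at h1
  have hφ1 : ∀ s, s ∈ Icc (0:ℝ) t → φ s ≤ 1 := by
    intro s hs
    apply osgF_le_one
    have h1 : Real.exp (G s) ≤ Real.exp (G t) := Real.exp_le_exp.mpr (hGmem s hs).2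
    linarith
  have hμφint : ∀ c d, c ∈ Icc (0:ℝ) t → d ∈ Icc (0:ℝ) t →
      IntervalIntegrable (fun τ => γ τ * osgMu (φ τ)) volume c d := by
    intro c d hc hd
    exact (hkint c d hc hd).mul_continuousOn
      (hcont_uIcc (fun τ => osgMu (φ τ))
        (osgMu_continuous.comp_continuousOn hφcont) c d hc hd)
  have hφsuper : ∀ s, s ∈ Icc (0:ℝ) t →
      a + (∫ τ in (0:ℝ)..s, γ τ * osgMu (φ τ)) ≤ φ s := by
    intro s hs
    have hFTC : (∫ u in (0:ℝ)..(G s), osgMu (osgF a u)) = φ s - a := by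
      rw [intervalIntegral.integral_eq_sub_of_hasDerivAt
        (f := osgF a) (fun x _ => osgF_hasDerivAt a x)
        ((osgMu_continuous.comp (osgF_continuous a)).intervalIntegrable _ _)]
      rw [osgF_zero ha, hφdef]
    have hsub := osg_subst γ (fun u => osgMu (osgF a u)) s hs.1
      (hγ_loc s hs.1) (fun τ hτ => hγ_nonneg τ hτ.1)
      (osgMu_continuous.comp (osgF_continuous a))
    have heq : (∫ τ in (0:ℝ)..s, γ τ * osgMu (φ τ)) =
        ∫ τ in (0:ℝ)..s, γ τ * osgMu (osgF a (∫ σ in (0:ℝ)..τ, γ σ)) := rfl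
    rw [heq]
    have heq2 : (∫ u in (0:ℝ)..(∫ σ in (0:ℝ)..s, γ σ), osgMu (osgF a u)) =
        ∫ u in (0:ℝ)..(G s), osgMu (osgF a u) := rfl
    rw [heq2, hFTC] at hsub
    linarith
  -- the deviation v and its Gronwall inequality
  set L : ℝ := 1 - Real.log a with hLdef
  have hL0 : 0 < L := by rw [hLdef]; linarith
  set v : ℝ → ℝ := fun s => max (β s - φ s) 0 with hvdef
  have hvcont : ContinuousOn v (Icc 0 t) := fun x hx =>
    ((hβcont x hx).sub (hφcont x hx)).max continuousWithinAt_const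
  have hv0 : ∀ s, s ∈ Icc (0:ℝ) t → 0 ≤ v s := fun s _ => le_max_right _ _
  have hvint : ∀ c d, c ∈ Icc (0:ℝ) t → d ∈ Icc (0:ℝ) t →
      IntervalIntegrable (fun τ => (L * γ τ) * v τ) volume c d := by
    intro c d hc hd
    exact ((hkint c d hc hd).const_mul L).mul_continuousOn
      (hcont_uIcc v hvcont c d hc hd)
  have hvineq : ∀ s, s ∈ Icc (0:ℝ) t →
      v s ≤ ∫ τ in (0:ℝ)..s, (L * γ τ) * v τ := by
    intro s hs
    have hnn : 0 ≤ ∫ τ in (0:ℝ)..s, (L * γ τ) * v τ := by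
      apply intervalIntegral.integral_nonneg hs.1
      intro u hu
      have : u ∈ Icc (0:ℝ) t := ⟨hu.1, le_trans hu.2 hs.2⟩
      exact mul_nonneg (mul_nonneg hL0.le (hγ_nonneg u hu.1)) (hv0 u this)
    apply max_le _ hnn
    have h1 := hβμ s hs
    have h2 := hφsuper s hs
    have h3 : (∫ τ in (0:ℝ)..s, γ τ * osgMuHat (β τ)) -
        (∫ τ in (0:ℝ)..s, γ τ * osgMu (φ τ)) =
        ∫ τ in (0:ℝ)..s, (γ τ * osgMuHat (β τ) - γ τ * osgMu (φ τ)) :=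
      (intervalIntegral.integral_sub
        (hmhβint 0 s (left_mem_Icc.mpr ht) hs)
        (hμφint 0 s (left_mem_Icc.mpr ht) hs)).symm
    have h4 : (∫ τ in (0:ℝ)..s, (γ τ * osgMuHat (β τ) - γ τ * osgMu (φ τ))) ≤
        ∫ τ in (0:ℝ)..s, (L * γ τ) * v τ := by
      apply intervalIntegral.integral_mono_on hs.1
        (((hmhβint 0 s (left_mem_Icc.mpr ht) hs)).sub
          (hμφint 0 s (left_mem_Icc.mpr ht) hs))
        (hvint 0 s (left_mem_Icc.mpr ht) hs)
      intro τ hτ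
      have hτt : τ ∈ Icc (0:ℝ) t := ⟨hτ.1, le_trans hτ.2 hs.2⟩
      have hγτ := hγ_nonneg τ hτ.1
      have hφτa := hφa τ hτt
      have hφτ1 := hφ1 τ hτt
      have hφτ0 : (0:ℝ) ≤ φ τ := le_trans ha.le hφτa
      have hμφhat : osgMu (φ τ) = osgMuHat (φ τ) := by
        rw [osgMuHat, osgProj_of_mem hφτ0 hφτ1]
      show γ τ * osgMuHat (β τ) - γ τ * osgMu (φ τ) ≤ (L * γ τ) * v τ
      rw [hμφhat]
      rcases le_total (β τ) (φ τ) with hc | hc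
      · have hmono := osgMuHat_monotone hc
        have hvnn : 0 ≤ v τ := hv0 τ hτt
        have e1 : γ τ * osgMuHat (β τ) - γ τ * osgMuHat (φ τ) ≤ 0 := by nlinarith
        nlinarith [mul_nonneg (mul_nonneg hL0.le hγτ) hvnn]
      · have hlip := osgMuHat_lip ha ha1 (le_trans hφτa hc) hφτa
        rw [abs_of_nonneg (by linarith)] at hlip
        have hvτ : v τ = β τ - φ τ := max_eq_left (by linarith)
        rw [hvτ]
        calc γ τ * osgMuHat (β τ) - γ τ * osgMuHat (φ τ)
            = γ τ * (osgMuHat (β τ) - osgMuHat (φ τ)) := by ring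
        _ ≤ γ τ * (L * (β τ - φ τ)) := mul_le_mul_of_nonneg_left hlip hγτ
        _ = (L * γ τ) * (β τ - φ τ) := by ring
    linarith
  -- conclude via the vanishing lemma
  have hvzero : v t = 0 := by
    apply osg_vanish (fun τ => L * γ τ) v t ht
      ((hγ_loc t ht).const_mul L)
      (fun τ hτ => mul_nonneg hL0.le (hγ_nonneg τ hτ.1))
      hvcont hv0 hvineq
  have hβφ : β t ≤ φ t := by
    have : β t - φ t ≤ 0 := by
      by_contra hcon
      push_neg at hcon
      have : v t = β t - φ t := max_eq_left hcon.le
      rw [hvzero] at this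
      linarith
    linarith
  have hfinal : α t ≤ φ t := le_trans (hαβ t ht) hβφ
  -- rewrite φ t in the required form
  have hφt : φ t = a ^ (Real.exp (-(G t))) * Real.exp (1 - Real.exp (-(G t))) := by
    rw [hφdef]
    simp only [osgF]
    rw [Real.rpow_def_of_pos ha, ← Real.exp_add]
    congr 1
    ring
  rw [← hφt]
  exact hfinal
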